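/- arXiv:2104.14334 — 4 statements merged into one kernel-verified Lean document; each statement's English description precedes it below -/
import Mathlib

section
/- Let (λⁿ)_{n≥1} ⊂ Λ and λ ∈ Λ be such that for every m ≥ 1, every finite Borel partition {A₁, …, A_m} of [0,T], and all bounded continuous functions g₁, …, g_m : U → ℝ, one has ∫ Σ_{l=1}^m 1_{A_l}(t) g_l(u) λⁿ(dt,du) → ∫ Σ_{l=1}^m 1_{A_l}(t) g_l(u) λ(dt,du) as n → ∞. Then (λⁿ) converges stably to λ: for every bounded f : [0,T] × U → ℝ that is Borel measurable in t for each u and continuous in u for each t, ∫ f dλⁿ → ∫ f dλ. -/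
open MeasureTheory Filter Topology

/-- If the integrals of all "simple" test functions `Σ_{l=1}^m 1_{A_l}(t) g_l(u)`
(with `{A_l}` a finite Borel partition of `[0,T]` and `g_l` bounded continuous on `U`)
converge along `(λⁿ)` to the corresponding integrals against `λ`, then `λⁿ → λ` stably:
`∫ f dλⁿ → ∫ f dλ` for every bounded `f` measurable in `t` and continuous in `u`. -/
theorem simple_convergence_implies_stable_convergence
    (T : ℝ) (hT : 0 < T) (U : Set ℝ) (hU : IsCompact U) (hUne : U.Nonempty)
    (lam : ℕ → Measure (↥(Set.Icc (0:ℝ) T) × ↥U))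
    (lamLim : Measure (↥(Set.Icc (0:ℝ) T) × ↥U))
    -- `λⁿ ∈ Λ`
    (hlam : ∀ n, ∀ t ∈ Set.Icc (0:ℝ) T,
      lam n {p : ↥(Set.Icc (0:ℝ) T) × ↥U | (p.1 : ℝ) ≤ t} = ENNReal.ofReal t)
    -- `λ ∈ Λ`
    (hlamLim : ∀ t ∈ Set.Icc (0:ℝ) T,
      lamLim {p : ↥(Set.Icc (0:ℝ) T) × ↥U | (p.1 : ℝ) ≤ t} = ENNReal.ofReal t)
    -- convergence of integrals of simple test functions
    (hsimple : ∀ m : ℕ, 1 ≤ m → ∀ A : Fin m → Set (↥(Set.Icc (0:ℝ) T)),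
      (∀ l, MeasurableSet (A l)) →
      (Pairwise fun l l' => Disjoint (A l) (A l')) →
      (⋃ l, A l) = Set.univ →
      ∀ g : Fin m → ↥U → ℝ,
        (∀ l, Continuous (g l)) → (∀ l, ∃ C, ∀ u, |g l u| ≤ C) →
        Tendsto
          (fun n => ∫ p, ∑ l, (A l).indicator (fun _ => g l p.2) p.1 ∂(lam n))
          atTop
          (𝓝 (∫ p, ∑ l, (A l).indicator (fun _ => g l p.2) p.1 ∂lamLim))) :
    -- stable convergence
    ∀ f : ↥(Set.Icc (0:ℝ) T) × ↥U → ℝ,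
      (∃ C, ∀ p, |f p| ≤ C) →
      (∀ u : ↥U, Measurable fun t : ↥(Set.Icc (0:ℝ) T) => f (t, u)) →
      (∀ t : ↥(Set.Icc (0:ℝ) T), Continuous fun u : ↥U => f (t, u)) →
      Tendsto (fun n => ∫ p, f p ∂(lam n)) atTop (𝓝 (∫ p, f p ∂lamLim)) := by
  intro f hfb hfm hfc
  obtain ⟨C, hC⟩ := hfb
  haveI hUc : CompactSpace ↥U := isCompact_iff_compactSpace.mp hU
  haveI : Nonempty ↥U := hUne.to_subtype
  haveI : Nonempty ↥(Set.Icc (0:ℝ) T) := ⟨⟨0, le_refl 0, hT.le⟩⟩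
  have hCnn : 0 ≤ C := (abs_nonneg _).trans (hC (Classical.arbitrary _))
  -- joint measurability of f
  have hfmeas : Measurable f := by
    have h1 : Measurable (Function.uncurry fun (u : ↥U) (t : ↥(Set.Icc (0:ℝ) T)) => f (t, u)) :=
      measurable_uncurry_of_continuous_of_measurable (fun t => hfc t) (fun u => hfm u)
    have : f = (Function.uncurry fun (u : ↥U) (t : ↥(Set.Icc (0:ℝ) T)) => f (t, u)) ∘ Prod.swap := by
      funext p; rfl
    rw [this]
    exact h1.comp measurable_swap
  -- all measures give the whole space mass `ofReal T`
  have huniv : ∀ μ : Measure (↥(Set.Icc (0:ℝ) T) × ↥U),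
      (∀ t ∈ Set.Icc (0:ℝ) T, μ {p : ↥(Set.Icc (0:ℝ) T) × ↥U | (p.1 : ℝ) ≤ t} = ENNReal.ofReal t) →
      μ Set.univ = ENNReal.ofReal T := by
    intro μ h
    rw [← h T ⟨hT.le, le_rfl⟩]
    congr 1
    ext p
    simp [p.1.2.2]
  have finn : ∀ n, IsFiniteMeasure (lam n) := fun n =>
    ⟨by rw [huniv _ (hlam n)]; exact ENNReal.ofReal_lt_top⟩
  haveI finL : IsFiniteMeasure lamLim :=
    ⟨by rw [huniv _ hlamLim]; exact ENNReal.ofReal_lt_top⟩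
  -- common first marginal
  set ν : Measure ↥(Set.Icc (0:ℝ) T) := lamLim.map Prod.fst with hνdef
  have hIic : ∀ μ : Measure (↥(Set.Icc (0:ℝ) T) × ↥U),
      (∀ t ∈ Set.Icc (0:ℝ) T, μ {p : ↥(Set.Icc (0:ℝ) T) × ↥U | (p.1 : ℝ) ≤ t} = ENNReal.ofReal t) →
      ∀ a : ↥(Set.Icc (0:ℝ) T), μ.map Prod.fst (Set.Iic a) = ENNReal.ofReal a := by
    intro μ h a
    rw [Measure.map_apply measurable_fst measurableSet_Iic]
    have hset : Prod.fst ⁻¹' (Set.Iic a) =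
        {p : ↥(Set.Icc (0:ℝ) T) × ↥U | (p.1 : ℝ) ≤ (a : ℝ)} := by
      ext p; simp [Set.mem_Iic, ← Subtype.coe_le_coe]
    rw [hset, h a a.2]
  have hmap : ∀ n, (lam n).map Prod.fst = ν := by
    intro n
    haveI := finn n
    refine MeasureTheory.Measure.ext_of_Iic _ _ (fun a => ?_)
    rw [hIic _ (hlam n) a, hIic _ hlamLim a]
  have hν_univ : ν Set.univ = ENNReal.ofReal T := by
    rw [hνdef, Measure.map_apply measurable_fst MeasurableSet.univ, Set.preimage_univ,
      huniv _ hlamLim]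
  haveI : IsFiniteMeasure ν := ⟨by rw [hν_univ]; exact ENNReal.ofReal_lt_top⟩
  -- integrability of bounded measurable functions
  have int_bdd : ∀ (μ : Measure (↥(Set.Icc (0:ℝ) T) × ↥U)), IsFiniteMeasure μ →
      ∀ (h : ↥(Set.Icc (0:ℝ) T) × ↥U → ℝ), Measurable h → (∃ D, ∀ p, |h p| ≤ D) →
      Integrable h μ := by
    intro μ hfin h hmeas ⟨D, hD⟩
    haveI := hfin
    exact ⟨hmeas.aestronglyMeasurable,
      MeasureTheory.HasFiniteIntegral.of_bounded (C := D)
        (Filter.Eventually.of_forall (fun p => by rw [Real.norm_eq_abs]; exact hD p))⟩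
  -- main ε-argument
  rw [Metric.tendsto_nhds]
  intro ε hε
  set ε1 : ℝ := ε / (6 * (T + 1)) with hε1def
  have hε1 : 0 < ε1 := by positivity
  -- dense sequences
  let g : ℕ → C(↥U, ℝ) := TopologicalSpace.denseSeq _
  have hg : DenseRange g := TopologicalSpace.denseRange_denseSeq _
  let d : ℕ → ↥U := TopologicalSpace.denseSeq _
  have hd : DenseRange d := TopologicalSpace.denseRange_denseSeq _
  -- approximating sets
  set A : ℕ → Set ↥(Set.Icc (0:ℝ) T) := fun k => {t | ∀ u, |f (t, u) - g k u| ≤ ε1} with hAdef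
  have hAmeas : ∀ k, MeasurableSet (A k) := by
    intro k
    have hrw : A k = ⋂ i : ℕ, {t | |f (t, d i) - g k (d i)| ≤ ε1} := by
      ext t
      constructor
      · intro ht
        exact Set.mem_iInter.2 fun i => ht (d i)
      · intro ht u
        have hcl : IsClosed {u : ↥U | |f (t, u) - g k u| ≤ ε1} :=
          isClosed_le (((hfc t).sub (g k).continuous).abs) continuous_const
        have hsub : Set.range d ⊆ {u : ↥U | |f (t, u) - g k u| ≤ ε1} := by
          rintro _ ⟨i, rfl⟩
          exact Set.mem_iInter.1 ht i
        have := hcl.closure_subset_iff.2 hsub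
        exact this (by rw [hd.closure_eq]; trivial)
    rw [hrw]
    exact MeasurableSet.iInter fun i =>
      measurableSet_le ((hfm (d i)).sub measurable_const).abs measurable_const
  have hAcover : (⋃ k, A k) = Set.univ := by
    ext t
    simp only [Set.mem_iUnion, Set.mem_univ, iff_true]
    obtain ⟨k, hk⟩ := Metric.denseRange_iff.mp hg (ContinuousMap.mk _ (hfc t)) ε1 hε1
    refine ⟨k, fun u => ?_⟩
    have h1 : dist (f (t, u)) (g k u) ≤ dist (ContinuousMap.mk _ (hfc t)) (g k) :=
      ContinuousMap.dist_apply_le_dist (f := ContinuousMap.mk _ (hfc t)) (g := g k) u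
    rw [Real.dist_eq] at h1
    exact h1.trans hk.le
  -- remainder sets
  set R : ℕ → Set ↥(Set.Icc (0:ℝ) T) := fun m => (⋃ k, ⋃ (_ : k ≤ m), A k)ᶜ with hRdef
  have hRmeas : ∀ m, MeasurableSet (R m) :=
    fun m => (MeasurableSet.biUnion (Set.to_countable _) (fun k _ => hAmeas k)).compl
  have hRtend : Tendsto (fun m => ν (R m)) atTop (𝓝 0) := by
    have hanti : Antitone R := by
      intro a b hab
      apply Set.compl_subset_compl.2
      exact Set.biUnion_subset_biUnion_left fun k hk => le_trans hk hab
    have hempty : (⋂ m, R m) = ∅ := by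
      have hcompl : (⋃ m, (R m)ᶜ) = Set.univ := by
        ext t
        simp only [hRdef, compl_compl, Set.mem_iUnion, Set.mem_univ, iff_true]
        have ht : t ∈ ⋃ k, A k := by rw [hAcover]; trivial
        obtain ⟨k, hk⟩ := Set.mem_iUnion.1 ht
        exact ⟨k, k, le_rfl, hk⟩
      rw [← compl_compl (⋂ m, R m), Set.compl_iInter, hcompl, Set.compl_univ]
    have := MeasureTheory.tendsto_measure_iInter_atTop (μ := ν)
      (fun m => (hRmeas m).nullMeasurableSet) hanti ⟨0, measure_ne_top ν _⟩
    rw [hempty] at this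
    simpa [Function.comp_def] using this
  have hbound_pos : (0:ENNReal) < ENNReal.ofReal (ε / (6 * (C + 1))) :=
    ENNReal.ofReal_pos.2 (by positivity)
  obtain ⟨m, hm⟩ := (hRtend.eventually_lt_const hbound_pos).exists
  -- the partition
  set D2 : ℕ → Set ↥(Set.Icc (0:ℝ) T) := disjointed A with hD2def
  have hD2meas : ∀ k, MeasurableSet (D2 k) := MeasurableSet.disjointed hAmeas
  have hD2disj : Pairwise (Function.onFun Disjoint D2) := disjoint_disjointed A
  have hD2sub : ∀ k, D2 k ⊆ A k := fun k => disjointed_le A k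
  have hDU : (⋃ k, ⋃ (_ : k ≤ m), D2 k) = ⋃ k, ⋃ (_ : k ≤ m), A k := by
    have h3 : partialSups (disjointed A) m = partialSups A m := by
      rw [partialSups_disjointed]
    rw [partialSups_eq_biSup, partialSups_eq_biSup] at h3
    exact h3
  set B : Fin (m + 2) → Set ↥(Set.Icc (0:ℝ) T) :=
    fun l => if (l : ℕ) ≤ m then D2 l else R m with hBdef
  set G : Fin (m + 2) → ↥U → ℝ := fun l => if (l : ℕ) ≤ m then g l else 0 with hGdef
  have hBmeas : ∀ l, MeasurableSet (B l) := by
    intro l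
    by_cases hl : (l : ℕ) ≤ m
    · simp only [hBdef, hl, if_true]; exact hD2meas l
    · simp only [hBdef, hl, if_false]; exact hRmeas m
  have hD2R : ∀ k, k ≤ m → Disjoint (D2 k) (R m) := by
    intro k hk
    rw [Set.disjoint_left]
    intro t ht hR
    exact hR (Set.mem_biUnion hk (hD2sub k ht))
  have hBdisj : Pairwise fun l l' => Disjoint (B l) (B l') := by
    intro l l' hne
    by_cases hl : (l : ℕ) ≤ m <;> by_cases hl' : (l' : ℕ) ≤ m
    · simp only [hBdef, hl, hl', if_true]
      exact hD2disj (fun h => hne (by exact_mod_cast Fin.val_injective (by exact_mod_cast h)))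
    · simp only [hBdef, hl, hl', if_true, if_false]
      exact hD2R l hl
    · simp only [hBdef, hl, hl', if_true, if_false]
      exact (hD2R l' hl').symm
    · exact (hne (Fin.ext (by have e1 := l.isLt; have e2 := l'.isLt; omega))).elim
  have hBunion : (⋃ l, B l) = Set.univ := by
    ext t
    simp only [Set.mem_iUnion, Set.mem_univ, iff_true]
    by_cases ht : t ∈ R m
    · refine ⟨Fin.last (m + 1), ?_⟩
      have : ((Fin.last (m + 1) : Fin (m + 2)) : ℕ) = m + 1 := rfl
      simp only [hBdef, this]
      simp only [show ¬ (m + 1 ≤ m) by omega, if_false]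
      exact ht
    · have : t ∈ ⋃ k, ⋃ (_ : k ≤ m), D2 k := by
        rw [hDU]
        exact not_not.1 ht
      obtain ⟨k, hk, htk⟩ := Set.mem_iUnion₂.1 this
      refine ⟨⟨k, by omega⟩, ?_⟩
      simp only [hBdef, hk, if_true]
      exact htk
  have hGcont : ∀ l, Continuous (G l) := by
    intro l
    by_cases hl : (l : ℕ) ≤ m
    · simp only [hGdef, hl, if_true]; exact (g l).continuous
    · simp only [hGdef, hl, if_false]; exact continuous_const
  have hbdd_cm : ∀ h : C(↥U, ℝ), ∃ Ch, 0 ≤ Ch ∧ ∀ u, |h u| ≤ Ch := by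
    intro h
    obtain ⟨u0, -, hu0⟩ := isCompact_univ.exists_isMaxOn (Set.univ_nonempty)
      (h.continuous.abs.continuousOn : ContinuousOn (fun u => |h u|) Set.univ)
    exact ⟨|h u0|, abs_nonneg _, fun u => hu0 (Set.mem_univ u)⟩
  have hGbdd : ∀ l, ∃ Cl, 0 ≤ Cl ∧ ∀ u, |G l u| ≤ Cl := by
    intro l
    by_cases hl : (l : ℕ) ≤ m
    · simp only [hGdef, hl, if_true]; exact hbdd_cm (g l)
    · exact ⟨0, le_rfl, fun u => by simp [hGdef, hl]⟩
  -- the simple approximation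
  set Tm : ↥(Set.Icc (0:ℝ) T) × ↥U → ℝ :=
    fun p => ∑ l, (B l).indicator (fun _ => G l p.2) p.1 with hTmdef
  have hterm_rw : ∀ l : Fin (m + 2),
      (fun p : ↥(Set.Icc (0:ℝ) T) × ↥U => (B l).indicator (fun _ => G l p.2) p.1) =
      Set.indicator (Prod.fst ⁻¹' B l) (fun p => G l p.2) := by
    intro l
    funext p
    by_cases hp : p.1 ∈ B l <;>
      simp [Set.indicator_apply, hp, Set.mem_preimage]
  have hTmmeas : Measurable Tm := by
    apply Finset.measurable_sum
    intro l _
    rw [hterm_rw l]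
    exact Measurable.indicator ((hGcont l).measurable.comp measurable_snd)
      (measurable_fst (hBmeas l))
  have hTmbdd : ∃ D, ∀ p, |Tm p| ≤ D := by
    choose Cl hCl0 hCl using hGbdd
    refine ⟨∑ l, Cl l, fun p => ?_⟩
    refine (Finset.abs_sum_le_sum_abs _ _).trans (Finset.sum_le_sum fun l _ => ?_)
    by_cases hp : p.1 ∈ B l
    · rw [Set.indicator_of_mem hp]; exact hCl l p.2
    · rw [Set.indicator_of_notMem hp, abs_zero]; exact hCl0 l
  -- pointwise estimate
  set S : Set (↥(Set.Icc (0:ℝ) T) × ↥U) := Prod.fst ⁻¹' (R m) with hSdef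
  have hSmeas : MeasurableSet S := measurable_fst (hRmeas m)
  have hpt : ∀ p, |f p - Tm p| ≤ ε1 + Set.indicator S (fun _ => C) p := by
    intro p
    by_cases hp : p.1 ∈ R m
    · have hTm0 : Tm p = 0 := by
        apply Finset.sum_eq_zero
        intro l _
        by_cases hl : (l : ℕ) ≤ m
        · have hnot : p.1 ∉ B l := by
            simp only [hBdef, hl, if_true]
            exact fun hmem => (Set.disjoint_left.1 (hD2R l hl)) hmem hp
          rw [Set.indicator_of_notMem hnot]
        · have : G l p.2 = 0 := by simp [hGdef, hl]
          rw [this]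
          simp
      rw [hTm0, sub_zero]
      have hind : Set.indicator S (fun _ => C) p = C := Set.indicator_of_mem (show p ∈ S from hp) _
      rw [hind]
      have := hC p
      linarith
    · have : p.1 ∈ ⋃ k, ⋃ (_ : k ≤ m), D2 k := by
        rw [hDU]; exact not_not.1 hp
      obtain ⟨k, hk, hpk⟩ := Set.mem_iUnion₂.1 this
      have hTmval : Tm p = g k p.2 := by
        have hkfin : ((⟨k, by omega⟩ : Fin (m + 2)) : ℕ) = k := rfl
        rw [hTmdef]
        refine Finset.sum_eq_single (⟨k, by omega⟩ : Fin (m + 2)) (fun l _ hne => ?_) (by simp) |>.trans ?_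
        · by_cases hl : (l : ℕ) ≤ m
          · have hnot : p.1 ∉ B l := by
              simp only [hBdef, hl, if_true]
              intro hmem
              have hknel : (k : ℕ) ≠ (l : ℕ) := fun h =>
                hne (Fin.ext (by simp [hkfin, h]))
              exact Set.disjoint_left.1 (hD2disj fun h => hknel (by rw [h])) hpk hmem
            rw [Set.indicator_of_notMem hnot]
          · have : G l p.2 = 0 := by simp [hGdef, hl]
            rw [this]; simp
        · have hmem : p.1 ∈ B ⟨k, by omega⟩ := by
            simp only [hBdef, hkfin, hk, if_true]
            exact hpk
          rw [Set.indicator_of_mem hmem]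
          simp [hGdef, hkfin, hk]
      rw [hTmval]
      have h1 : |f p - g k p.2| ≤ ε1 := by
        have := hpk
        have hpA : p.1 ∈ A k := hD2sub k hpk
        have := hpA p.2
        simpa using this
      have hind : Set.indicator S (fun _ => C) p = 0 := Set.indicator_of_notMem (show p ∉ S from hp) _
      rw [hind]
      linarith
  -- key per-measure estimate
  have key : ∀ (μ : Measure (↥(Set.Icc (0:ℝ) T) × ↥U)), IsFiniteMeasure μ →
      μ.map Prod.fst = ν → |(∫ p, f p ∂μ) - ∫ p, Tm p ∂μ| ≤ ε / 3 := by
    intro μ hfin hμmap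
    haveI := hfin
    have hμuniv : (μ Set.univ).toReal = T := by
      have : μ Set.univ = ν Set.univ := by
        rw [← hμmap, Measure.map_apply measurable_fst MeasurableSet.univ, Set.preimage_univ]
      rw [this, hν_univ, ENNReal.toReal_ofReal hT.le]
    have hμS : μ S = ν (R m) := by
      rw [← hμmap, Measure.map_apply measurable_fst (hRmeas m)]
    have hif : Integrable f μ := int_bdd μ hfin f hfmeas ⟨C, hC⟩
    have hiT : Integrable Tm μ := int_bdd μ hfin Tm hTmmeas hTmbdd
    have hiS : Integrable (fun p => Set.indicator S (fun _ => C) p) μ :=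
      (integrable_const C).indicator hSmeas
    have hcalc : |(∫ p, f p ∂μ) - ∫ p, Tm p ∂μ| ≤ ε1 * T + C * (ν (R m)).toReal := by
      rw [← integral_sub hif hiT]
      calc |∫ p, (f p - Tm p) ∂μ| ≤ ∫ p, |f p - Tm p| ∂μ := by
            simpa [Real.norm_eq_abs] using
              norm_integral_le_integral_norm (μ := μ) (fun p => f p - Tm p)
        _ ≤ ∫ p, (ε1 + Set.indicator S (fun _ => C) p) ∂μ :=
            integral_mono (hif.sub hiT).abs ((integrable_const ε1).add hiS) hpt
        _ = ε1 * T + C * (ν (R m)).toReal := by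
            rw [integral_add (integrable_const ε1) hiS, integral_const,
              integral_indicator_const _ hSmeas, measureReal_def, measureReal_def, hμuniv, hμS, smul_eq_mul, smul_eq_mul]
            ring
    have h1 : ε1 * T ≤ ε / 6 := by
      have h2 : ε1 * T ≤ ε1 * (T + 1) := by nlinarith
      have h3 : ε1 * (T + 1) = ε / 6 := by
        rw [hε1def]; field_simp
      linarith
    have h4 : (ν (R m)).toReal ≤ ε / (6 * (C + 1)) :=
      ENNReal.toReal_le_of_le_ofReal (by positivity) hm.le
    have h5 : C * (ν (R m)).toReal ≤ ε / 6 := by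
      have h6 : C * (ν (R m)).toReal ≤ C * (ε / (6 * (C + 1))) :=
        mul_le_mul_of_nonneg_left h4 hCnn
      have h7 : C * (ε / (6 * (C + 1))) ≤ ε / 6 := by
        have hx : (0:ℝ) ≤ ε / (6 * (C + 1)) := by positivity
        have h8 : C * (ε / (6 * (C + 1))) ≤ (C + 1) * (ε / (6 * (C + 1))) :=
          mul_le_mul_of_nonneg_right (by linarith) hx
        have h9 : (C + 1) * (ε / (6 * (C + 1))) = ε / 6 := by
          field_simp
        linarith
      linarith
    linarith
  -- conclude
  have htend := hsimple (m + 2) (by omega) B hBmeas hBdisj hBunion G hGcont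
    (fun l => (hGbdd l).imp fun Cl h => h.2)
  have h3 := (Metric.tendsto_nhds.mp htend) (ε / 3) (by positivity)
  filter_upwards [h3] with n hn
  have k1 : |(∫ p, f p ∂(lam n)) - ∫ p, Tm p ∂(lam n)| ≤ ε / 3 :=
    key (lam n) (finn n) (hmap n)
  have k2 : |(∫ p, f p ∂lamLim) - ∫ p, Tm p ∂lamLim| ≤ ε / 3 :=
    key lamLim finL rfl
  rw [Real.dist_eq] at hn ⊢
  have hnT : |(∫ p, Tm p ∂(lam n)) - ∫ p, Tm p ∂lamLim| < ε / 3 := hn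
  have t1 : |(∫ p, f p ∂(lam n)) - ∫ p, f p ∂lamLim| ≤
      |(∫ p, f p ∂(lam n)) - ∫ p, Tm p ∂(lam n)| +
      |(∫ p, Tm p ∂(lam n)) - ∫ p, Tm p ∂lamLim| +
      |(∫ p, Tm p ∂lamLim) - ∫ p, f p ∂lamLim| := by
    have a1 := abs_sub_le (∫ p, f p ∂(lam n)) (∫ p, Tm p ∂(lam n)) (∫ p, f p ∂lamLim)
    have a2 := abs_sub_le (∫ p, Tm p ∂(lam n)) (∫ p, Tm p ∂lamLim) (∫ p, f p ∂lamLim)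
    linarith
  have k2' : |(∫ p, Tm p ∂lamLim) - ∫ p, f p ∂lamLim| ≤ ε / 3 := by
    rw [abs_sub_comm]; exact k2
  linarith
end

section
/- Let (λⁿ)_{n≥1} ⊂ Λ converge weakly to λ ∈ Λ, i.e. ∫ f dλⁿ → ∫ f dλ for every bounded continuous f : [0,T] × U → ℝ. Then for every m ≥ 1, every finite Borel partition {A₁, …, A_m} of [0,T], and all bounded continuous functions g₁, …, g_m : U → ℝ, one has ∫ Σ_{l=1}^m 1_{A_l}(t) g_l(u) λⁿ(dt,du) → ∫ Σ_{l=1}^m 1_{A_l}(t) g_l(u) λ(dt,du) as n → ∞. -/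
open MeasureTheory Filter Topology

-- approximation lemma
lemma approx_indicator {α : Type*} [MeasurableSpace α] [TopologicalSpace α]
    [BorelSpace α] [NormalSpace α]
    (μ : Measure α) [IsFiniteMeasure μ] [μ.WeaklyRegular]
    {A : Set α} (hA : MeasurableSet A) {ε : ℝ} (hε : 0 < ε) :
    ∃ φ : α → ℝ, Continuous φ ∧ (∀ x, φ x ∈ Set.Icc (0:ℝ) 1) ∧
      ∫ x, |A.indicator 1 x - φ x| ∂μ < ε := by
  have hμA := measure_ne_top μ A
  have hε2 : (ENNReal.ofReal (ε/2)) ≠ 0 := by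
    simp [ENNReal.ofReal_eq_zero]; linarith
  obtain ⟨K, hKA, hKc, hK⟩ := hA.exists_isClosed_diff_lt hμA hε2
  obtain ⟨O, hAO, hOo, hO⟩ := A.exists_isOpen_lt_add hμA hε2
  have hOA : μ (O \ A) < ENNReal.ofReal (ε/2) :=
    measure_diff_lt_of_lt_add hA.nullMeasurableSet hAO hμA hO
  have hOK : μ (O \ K) < ENNReal.ofReal ε := by
    have hsub : O \ K ⊆ (O \ A) ∪ (A \ K) := by
      intro x hx
      by_cases hxA : x ∈ A
      · exact Or.inr ⟨hxA, hx.2⟩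
      · exact Or.inl ⟨hx.1, hxA⟩
    calc μ (O \ K) ≤ μ (O \ A) + μ (A \ K) := (measure_mono hsub).trans (measure_union_le _ _)
      _ < ENNReal.ofReal (ε/2) + ENNReal.ofReal (ε/2) :=
        ENNReal.add_lt_add hOA hK
      _ = ENNReal.ofReal ε := by rw [← ENNReal.ofReal_add (by linarith) (by linarith)]; ring_nf
  obtain ⟨f, hf0, hf1, hf01⟩ := exists_continuous_zero_one_of_isClosed
    hOo.isClosed_compl hKc (by
      rw [Set.disjoint_compl_left_iff_subset]; exact hKA.trans hAO)
  refine ⟨f, f.continuous, hf01, ?_⟩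
  have hmOK : MeasurableSet (O \ K) := hOo.measurableSet.diff hKc.measurableSet
  have hint : Integrable ((O \ K).indicator (1 : α → ℝ)) μ :=
    (integrable_const (1:ℝ)).indicator hmOK
  have hle : ∀ x, |A.indicator 1 x - f x| ≤ (O \ K).indicator 1 x := by
    intro x
    by_cases hxK : x ∈ K
    · have h1 : f x = 1 := hf1 hxK
      have h2 : A.indicator (1 : α → ℝ) x = 1 := Set.indicator_of_mem (hKA hxK) 1
      simp [h1, h2, Set.indicator_nonneg]
    · by_cases hxO : x ∈ O
      · have hm : x ∈ O \ K := ⟨hxO, hxK⟩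
        rw [Set.indicator_of_mem hm]
        have hfx := hf01 x
        have hAx : A.indicator (1 : α → ℝ) x = 0 ∨ A.indicator (1 : α → ℝ) x = 1 := by
          by_cases h : x ∈ A
          · exact Or.inr (Set.indicator_of_mem h 1)
          · exact Or.inl (Set.indicator_of_notMem h 1)
        rcases hAx with h | h <;> rw [h] <;> rw [abs_le] <;>
          constructor <;> simp at hfx ⊢ <;> nlinarith [hfx.1, hfx.2]
      · have h1 : f x = 0 := hf0 hxO
        have h2 : A.indicator (1 : α → ℝ) x = 0 :=
          Set.indicator_of_notMem (fun h => hxO (hAO h)) 1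
        have : x ∉ O \ K := fun h => hxO h.1
        simp [h1, h2, Set.indicator_of_notMem this]
  calc ∫ x, |A.indicator 1 x - f x| ∂μ ≤ ∫ x, (O \ K).indicator 1 x ∂μ :=
        integral_mono_of_nonneg (Filter.Eventually.of_forall fun x => abs_nonneg _) hint
          (Filter.Eventually.of_forall hle)
    _ = (μ (O \ K)).toReal := integral_indicator_one hmOK
    _ < ε := ENNReal.toReal_lt_of_lt_ofReal hOK

lemma marginal_unique (T : ℝ) (hT : 0 < T)
    (μ ν : Measure ↥(Set.Icc (0:ℝ) T))
    (hμ : ∀ t ∈ Set.Icc (0:ℝ) T, μ {x | (x:ℝ) ≤ t} = ENNReal.ofReal t)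
    (hν : ∀ t ∈ Set.Icc (0:ℝ) T, ν {x | (x:ℝ) ≤ t} = ENNReal.ofReal t) :
    μ = ν := by
  have huniv : {x : ↥(Set.Icc (0:ℝ) T) | (x:ℝ) ≤ T} = Set.univ :=
    Set.eq_univ_of_forall fun x => x.2.2
  have hIic : ∀ a : ↥(Set.Icc (0:ℝ) T),
      Set.Iic a = {x : ↥(Set.Icc (0:ℝ) T) | (x:ℝ) ≤ (a:ℝ)} := by
    intro a; ext x; simp [Set.Iic, Subtype.coe_le_coe]
  have hfin : IsFiniteMeasure μ := by
    constructor
    rw [← huniv, hμ T ⟨hT.le, le_rfl⟩]; exact ENNReal.ofReal_lt_top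
  refine ext_of_generate_finite (Set.range Set.Iic)
    (BorelSpace.measurable_eq.trans (borel_eq_generateFrom_Iic _)) isPiSystem_Iic ?_ ?_
  · rintro _ ⟨a, rfl⟩
    rw [hIic a, hμ (a:ℝ) a.2, hν (a:ℝ) a.2]
  · rw [← huniv, hμ T ⟨hT.le, le_rfl⟩, hν T ⟨hT.le, le_rfl⟩]

lemma single_term (T : ℝ) (hT : 0 < T) (U : Set ℝ) (hUne : U.Nonempty)
    (lam : ℕ → Measure (↥(Set.Icc (0:ℝ) T) × ↥U))
    (lamLim : Measure (↥(Set.Icc (0:ℝ) T) × ↥U))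
    (hlam : ∀ n, ∀ t ∈ Set.Icc (0:ℝ) T,
      lam n {p : ↥(Set.Icc (0:ℝ) T) × ↥U | (p.1 : ℝ) ≤ t} = ENNReal.ofReal t)
    (hlamLim : ∀ t ∈ Set.Icc (0:ℝ) T,
      lamLim {p : ↥(Set.Icc (0:ℝ) T) × ↥U | (p.1 : ℝ) ≤ t} = ENNReal.ofReal t)
    (hweak : ∀ f : ↥(Set.Icc (0:ℝ) T) × ↥U → ℝ, Continuous f →
      (∃ C, ∀ p, |f p| ≤ C) →
      Tendsto (fun n => ∫ p, f p ∂(lam n)) atTop (𝓝 (∫ p, f p ∂lamLim)))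
    (A : Set ↥(Set.Icc (0:ℝ) T)) (hA : MeasurableSet A)
    (g : ↥U → ℝ) (hg : Continuous g) (C : ℝ) (hgC : ∀ u, |g u| ≤ C) :
    Tendsto (fun n => ∫ p, A.indicator (fun _ => g p.2) p.1 ∂(lam n)) atTop
      (𝓝 (∫ p, A.indicator (fun _ => g p.2) p.1 ∂lamLim)) := by
  obtain ⟨u₀, hu₀⟩ := hUne
  have hC0 : 0 ≤ C := (abs_nonneg _).trans (hgC ⟨u₀, hu₀⟩)
  have huniv : {p : ↥(Set.Icc (0:ℝ) T) × ↥U | (p.1 : ℝ) ≤ T} = Set.univ :=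
    Set.eq_univ_of_forall fun p => p.1.2.2
  have hfin : ∀ μ : Measure (↥(Set.Icc (0:ℝ) T) × ↥U),
      (∀ t ∈ Set.Icc (0:ℝ) T, μ {p | (p.1 : ℝ) ≤ t} = ENNReal.ofReal t) →
      IsFiniteMeasure μ := by
    intro μ hμ
    constructor
    rw [← huniv, hμ T ⟨hT.le, le_rfl⟩]; exact ENNReal.ofReal_lt_top
  haveI hfinL : IsFiniteMeasure lamLim := hfin lamLim hlamLim
  have hfinn : ∀ n, IsFiniteMeasure (lam n) := fun n => hfin (lam n) (hlam n)
  set ν : Measure ↥(Set.Icc (0:ℝ) T) := lamLim.map Prod.fst with hν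
  have hmIic : ∀ t : ℝ, MeasurableSet {x : ↥(Set.Icc (0:ℝ) T) | (x:ℝ) ≤ t} :=
    fun t => measurableSet_le measurable_subtype_coe measurable_const
  have hmap : ∀ (μ : Measure (↥(Set.Icc (0:ℝ) T) × ↥U)) (t : ℝ),
      μ.map Prod.fst {x : ↥(Set.Icc (0:ℝ) T) | (x:ℝ) ≤ t} = μ {p | (p.1 : ℝ) ≤ t} := by
    intro μ t
    rw [Measure.map_apply measurable_fst (hmIic t)]
    rfl
  have hmargLim : ∀ t ∈ Set.Icc (0:ℝ) T,
      ν {x : ↥(Set.Icc (0:ℝ) T) | (x:ℝ) ≤ t} = ENNReal.ofReal t := by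
    intro t ht; rw [hν, hmap]; exact hlamLim t ht
  have hmarg : ∀ n, (lam n).map Prod.fst = ν := by
    intro n
    refine marginal_unique T hT _ _ ?_ hmargLim
    intro t ht; rw [hmap]; exact hlam n t ht
  haveI : IsFiniteMeasure ν := by
    constructor
    rw [hν, Measure.map_apply measurable_fst MeasurableSet.univ]
    exact measure_lt_top _ _
  rw [Metric.tendsto_atTop]
  intro ε hε
  have hε' : 0 < ε / (3 * (C + 1)) := by positivity
  obtain ⟨φ, hφc, hφ01, hδ⟩ := approx_indicator ν hA hε'
  set δ := ∫ x, |A.indicator 1 x - φ x| ∂ν with hδdef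
  have hδ0 : 0 ≤ δ := integral_nonneg fun x => abs_nonneg _
  set F : ↥(Set.Icc (0:ℝ) T) × ↥U → ℝ := fun p => φ p.1 * g p.2 with hF
  have hFc : Continuous F := (hφc.comp continuous_fst).mul (hg.comp continuous_snd)
  have hFbd : ∀ p, |F p| ≤ C := by
    intro p
    rw [hF, abs_mul]
    calc |φ p.1| * |g p.2| ≤ 1 * C := by
          apply mul_le_mul ?_ (hgC p.2) (abs_nonneg _) zero_le_one
          rw [abs_le]; exact ⟨by linarith [(hφ01 p.1).1], (hφ01 p.1).2⟩
      _ = C := one_mul C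
  have hFt := hweak F hFc ⟨C, hFbd⟩
  rw [Metric.tendsto_atTop] at hFt
  obtain ⟨N, hN⟩ := hFt (ε/3) (by linarith)
  refine ⟨N, fun n hn => ?_⟩
  -- measurability facts
  have mInd : Measurable (A.indicator (1 : ↥(Set.Icc (0:ℝ) T) → ℝ)) :=
    measurable_const.indicator hA
  have mS : Measurable (fun p : ↥(Set.Icc (0:ℝ) T) × ↥U => A.indicator 1 p.1 * g p.2) :=
    (mInd.comp measurable_fst).mul (hg.measurable.comp measurable_snd)
  have hrw : ∀ p : ↥(Set.Icc (0:ℝ) T) × ↥U,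
      A.indicator (fun _ => g p.2) p.1 = A.indicator 1 p.1 * g p.2 := by
    intro p; by_cases h : p.1 ∈ A <;> simp [h]
  have est : ∀ μ : Measure (↥(Set.Icc (0:ℝ) T) × ↥U), IsFiniteMeasure μ →
      μ.map Prod.fst = ν →
      |(∫ p, A.indicator 1 p.1 * g p.2 ∂μ) - ∫ p, F p ∂μ| ≤ C * δ := by
    intro μ hμfin hμmarg
    haveI := hμfin
    have i1 : Integrable (fun p : ↥(Set.Icc (0:ℝ) T) × ↥U => A.indicator 1 p.1 * g p.2) μ := by
      refine Integrable.mono' (integrable_const C) mS.aestronglyMeasurable ?_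
      refine Filter.Eventually.of_forall fun p => ?_
      rw [Real.norm_eq_abs, abs_mul]
      calc |A.indicator 1 p.1| * |g p.2| ≤ 1 * C := by
            refine mul_le_mul ?_ (hgC p.2) (abs_nonneg _) zero_le_one
            by_cases h : p.1 ∈ A <;> simp [h]
        _ = C := one_mul C
    have i2 : Integrable F μ := by
      refine Integrable.mono' (integrable_const C) hFc.measurable.aestronglyMeasurable ?_
      exact Filter.Eventually.of_forall fun p => (Real.norm_eq_abs _) ▸ hFbd p
    have mdiff : Measurable fun x : ↥(Set.Icc (0:ℝ) T) => |A.indicator 1 x - φ x| :=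
      (mInd.sub hφc.measurable).abs
    have i3 : Integrable (fun p : ↥(Set.Icc (0:ℝ) T) × ↥U =>
        C * |A.indicator 1 p.1 - φ p.1|) μ := by
      refine Integrable.mono' (integrable_const (C * 2))
        ((mdiff.comp measurable_fst).const_mul C).aestronglyMeasurable ?_
      refine Filter.Eventually.of_forall fun p => ?_
      rw [Real.norm_eq_abs, abs_mul, abs_abs, abs_of_nonneg hC0]
      refine mul_le_mul_of_nonneg_left ?_ hC0
      have h01 := hφ01 p.1
      by_cases h : p.1 ∈ A <;> simp [h, abs_le] <;>
        constructor <;> simp at h01 ⊢ <;> linarith [h01.1, h01.2]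
    rw [← integral_sub i1 i2]
    calc |∫ p, (A.indicator 1 p.1 * g p.2 - F p) ∂μ|
        ≤ ∫ p, |A.indicator 1 p.1 * g p.2 - F p| ∂μ := by
          exact (Real.norm_eq_abs _) ▸ norm_integral_le_integral_norm _
      _ ≤ ∫ p, C * |A.indicator 1 p.1 - φ p.1| ∂μ := by
          refine integral_mono_of_nonneg
            (Filter.Eventually.of_forall fun p => abs_nonneg _) i3
            (Filter.Eventually.of_forall fun p => ?_)
          show |A.indicator 1 p.1 * g p.2 - φ p.1 * g p.2| ≤ C * |A.indicator 1 p.1 - φ p.1|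
          have h4 : A.indicator (1 : ↥(Set.Icc (0:ℝ) T) → ℝ) p.1 * g p.2 - φ p.1 * g p.2
              = (A.indicator 1 p.1 - φ p.1) * g p.2 := by ring
          rw [h4, abs_mul, mul_comm C _]
          exact mul_le_mul_of_nonneg_left (hgC p.2) (abs_nonneg _)
      _ = C * ∫ p, |A.indicator 1 p.1 - φ p.1| ∂μ := integral_const_mul C _
      _ = C * δ := by
          rw [hδdef, ← hμmarg,
            integral_map measurable_fst.aemeasurable]
          exact mdiff.aestronglyMeasurable
  have e1 := est (lam n) (hfinn n) (hmarg n)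
  have e2 := est lamLim hfinL rfl
  have e3 := hN n hn
  rw [Real.dist_eq] at e3 ⊢
  have hrw1 : ∀ μ : Measure (↥(Set.Icc (0:ℝ) T) × ↥U),
      (∫ p, A.indicator (fun _ => g p.2) p.1 ∂μ) = ∫ p, A.indicator 1 p.1 * g p.2 ∂μ := by
    intro μ; exact integral_congr_ae (Filter.Eventually.of_forall hrw)
  rw [hrw1, hrw1]
  have hCδ : C * δ < ε / 3 := by
    have h1 : C * δ ≤ C * (ε / (3 * (C + 1))) :=
      mul_le_mul_of_nonneg_left hδ.le hC0
    have h2 : C * (ε / (3 * (C + 1))) < ε / 3 := by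
      rw [← mul_div_assoc, div_lt_div_iff₀ (by positivity) (by norm_num : (0:ℝ) < 3)]
      nlinarith
    linarith
  have e2' : |(∫ p, F p ∂lamLim) - ∫ p, A.indicator 1 p.1 * g p.2 ∂lamLim| ≤ C * δ := by
    rw [abs_sub_comm]; exact e2
  calc |(∫ p, A.indicator 1 p.1 * g p.2 ∂(lam n)) - ∫ p, A.indicator 1 p.1 * g p.2 ∂lamLim|
      ≤ |(∫ p, A.indicator 1 p.1 * g p.2 ∂(lam n)) - ∫ p, F p ∂(lam n)|
        + |(∫ p, F p ∂(lam n)) - ∫ p, A.indicator 1 p.1 * g p.2 ∂lamLim| :=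
        abs_sub_le _ _ _
    _ ≤ |(∫ p, A.indicator 1 p.1 * g p.2 ∂(lam n)) - ∫ p, F p ∂(lam n)|
        + (|(∫ p, F p ∂(lam n)) - ∫ p, F p ∂lamLim|
          + |(∫ p, F p ∂lamLim) - ∫ p, A.indicator 1 p.1 * g p.2 ∂lamLim|) := by
        linarith [abs_sub_le (∫ p, F p ∂(lam n)) (∫ p, F p ∂lamLim)
          (∫ p, A.indicator 1 p.1 * g p.2 ∂lamLim)]
    _ < ε := by linarith [e1, e2', e3, hCδ]

/-- Weak convergence `λⁿ → λ` in `Λ` implies the convergence of integrals of all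
"simple" test functions `Σ_{l=1}^m 1_{A_l}(t) g_l(u)`, where `{A_l}` is a finite
Borel partition of `[0,T]` and the `g_l` are bounded continuous on `U`. -/
theorem weak_convergence_implies_simple_convergence
    (T : ℝ) (hT : 0 < T) (U : Set ℝ) (hU : IsCompact U) (hUne : U.Nonempty)
    (lam : ℕ → Measure (↥(Set.Icc (0:ℝ) T) × ↥U))
    (lamLim : Measure (↥(Set.Icc (0:ℝ) T) × ↥U))
    -- `λⁿ ∈ Λ`
    (hlam : ∀ n, ∀ t ∈ Set.Icc (0:ℝ) T,
      lam n {p : ↥(Set.Icc (0:ℝ) T) × ↥U | (p.1 : ℝ) ≤ t} = ENNReal.ofReal t)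
    -- `λ ∈ Λ`
    (hlamLim : ∀ t ∈ Set.Icc (0:ℝ) T,
      lamLim {p : ↥(Set.Icc (0:ℝ) T) × ↥U | (p.1 : ℝ) ≤ t} = ENNReal.ofReal t)
    -- weak convergence `λⁿ → λ`
    (hweak : ∀ f : ↥(Set.Icc (0:ℝ) T) × ↥U → ℝ, Continuous f →
      (∃ C, ∀ p, |f p| ≤ C) →
      Tendsto (fun n => ∫ p, f p ∂(lam n)) atTop (𝓝 (∫ p, f p ∂lamLim))) :
    -- convergence of integrals of simple test functions
    ∀ m : ℕ, 1 ≤ m → ∀ A : Fin m → Set (↥(Set.Icc (0:ℝ) T)),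
      (∀ l, MeasurableSet (A l)) →
      (Pairwise fun l l' => Disjoint (A l) (A l')) →
      (⋃ l, A l) = Set.univ →
      ∀ g : Fin m → ↥U → ℝ,
        (∀ l, Continuous (g l)) → (∀ l, ∃ C, ∀ u, |g l u| ≤ C) →
        Tendsto
          (fun n => ∫ p, ∑ l, (A l).indicator (fun _ => g l p.2) p.1 ∂(lam n))
          atTop
          (𝓝 (∫ p, ∑ l, (A l).indicator (fun _ => g l p.2) p.1 ∂lamLim)) := by
  intro m hm A hA hdisj hunion g hg hgbd
  choose C hC using hgbd
  have huniv : {p : ↥(Set.Icc (0:ℝ) T) × ↥U | (p.1 : ℝ) ≤ T} = Set.univ :=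
    Set.eq_univ_of_forall fun p => p.1.2.2
  have hfin : ∀ μ : Measure (↥(Set.Icc (0:ℝ) T) × ↥U),
      (∀ t ∈ Set.Icc (0:ℝ) T, μ {p | (p.1 : ℝ) ≤ t} = ENNReal.ofReal t) →
      IsFiniteMeasure μ := by
    intro μ hμ
    constructor
    rw [← huniv, hμ T ⟨hT.le, le_rfl⟩]; exact ENNReal.ofReal_lt_top
  haveI hfinL : IsFiniteMeasure lamLim := hfin lamLim hlamLim
  have hfinn : ∀ n, IsFiniteMeasure (lam n) := fun n => hfin (lam n) (hlam n)
  obtain ⟨u₀, hu₀⟩ := hUne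
  have hC0 : ∀ l, 0 ≤ C l := fun l => (abs_nonneg _).trans (hC l ⟨u₀, hu₀⟩)
  have hkey : ∀ (μ : Measure (↥(Set.Icc (0:ℝ) T) × ↥U)), IsFiniteMeasure μ →
      (∫ p, ∑ l, (A l).indicator (fun _ => g l p.2) p.1 ∂μ)
        = ∑ l, ∫ p, (A l).indicator (fun _ => g l p.2) p.1 ∂μ := by
    intro μ hμfin
    haveI := hμfin
    refine integral_finset_sum _ fun l _ => ?_
    have meas : Measurable fun p : ↥(Set.Icc (0:ℝ) T) × ↥U =>
        (A l).indicator (fun _ => g l p.2) p.1 := by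
      have : (fun p : ↥(Set.Icc (0:ℝ) T) × ↥U => (A l).indicator (fun _ => g l p.2) p.1)
          = fun p => (A l).indicator 1 p.1 * g l p.2 := by
        funext p; by_cases h : p.1 ∈ A l <;> simp [h]
      rw [this]
      exact ((measurable_const.indicator (hA l)).comp measurable_fst).mul
        ((hg l).measurable.comp measurable_snd)
    refine Integrable.mono' (integrable_const (C l)) meas.aestronglyMeasurable ?_
    refine Filter.Eventually.of_forall fun p => ?_
    rw [Real.norm_eq_abs]
    by_cases h : p.1 ∈ A l
    · rw [Set.indicator_of_mem h]; exact hC l p.2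
    · rw [Set.indicator_of_notMem h]; simpa using hC0 l
  have hfun : (fun n => ∫ p, ∑ l, (A l).indicator (fun _ => g l p.2) p.1 ∂(lam n))
      = fun n => ∑ l, ∫ p, (A l).indicator (fun _ => g l p.2) p.1 ∂(lam n) :=
    funext fun n => hkey (lam n) (hfinn n)
  rw [hfun, hkey lamLim hfinL]
  exact tendsto_finset_sum _ fun l _ =>
    single_term T hT U ⟨u₀, hu₀⟩ lam lamLim hlam hlamLim hweak (A l) (hA l)
      (g l) (hg l) (C l) (hC l)
end

section
/- Let U be a compact metric space and let f : [0,T] × U → ℝ be bounded, Borel measurable in t for each u ∈ U, and continuous in u for each t ∈ [0,T]. Then there exist continuous functions c₀, c₁, c₂, … ∈ C(U) with c₀ ≡ 0 and, for each m ≥ 0, a finite Borel partition D_{0,m}, …, D_{m,m} of [0,T] such that the functions f_m(t,u) := Σ_{l=0}^m 1_{D_{l,m}}(t) c_l(u) satisfy: (1) for every t ∈ [0,T], sup_{u∈U} |f(t,u) − f_m(t,u)| = min_{0≤k≤m} sup_{u∈U}|f(t,u) − c_k(u)| → 0 as m → ∞; and (2) sup_{u∈U}|f_m(t,u)| ≤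 2 sup_{u∈U}|f(t,u)| for all t ∈ [0,T] and m ≥ 0. -/
open MeasureTheory Filter Topology

set_option maxHeartbeats 1000000 in
/-- Approximation of a bounded Carathéodory function `f : [0,T] × U → ℝ`
(measurable in `t`, continuous in `u`) by piecewise functions
`f_m(t,u) = Σ_{l=0}^m 1_{D_{l,m}}(t) c_l(u)` built from a sequence `(c_l)` of
continuous functions with `c₀ ≡ 0` and finite Borel partitions `(D_{l,m})_{0≤l≤m}`
of `[0,T]`:
(1) `sup_u |f(t,u) − f_m(t,u)| = min_{0≤k≤m} sup_u |f(t,u) − c_k(u)| → 0` for every `t`;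
(2) `sup_u |f_m(t,u)| ≤ 2 sup_u |f(t,u)|` for every `t` and `m`. -/
theorem caratheodory_piecewise_approximation
    (T : ℝ) (hT : 0 < T)
    (U : Type*) [MetricSpace U] [CompactSpace U] [Nonempty U]
    (f : ↥(Set.Icc (0:ℝ) T) × U → ℝ)
    (hbdd : ∃ C, ∀ p, |f p| ≤ C)
    (hmeas : ∀ u : U, Measurable fun t : ↥(Set.Icc (0:ℝ) T) => f (t, u))
    (hcont : ∀ t : ↥(Set.Icc (0:ℝ) T), Continuous fun u : U => f (t, u)) :
    ∃ c : ℕ → C(U, ℝ), c 0 = 0 ∧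
      ∃ D : (m : ℕ) → Fin (m + 1) → Set (↥(Set.Icc (0:ℝ) T)),
        (∀ m l, MeasurableSet (D m l)) ∧
        (∀ m, Pairwise fun l l' => Disjoint (D m l) (D m l')) ∧
        (∀ m, (⋃ l, D m l) = Set.univ) ∧
        -- (1) the sup-distance to `f_m` realizes the minimum over `k ≤ m` ...
        (∀ m, ∀ t : ↥(Set.Icc (0:ℝ) T),
          (⨆ u : U, |f (t, u) - ∑ l : Fin (m + 1),
              (D m l).indicator (fun _ => c (l : ℕ) u) t|)
            = ⨅ k : Fin (m + 1), ⨆ u : U, |f (t, u) - c (k : ℕ) u|) ∧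
        -- ... and tends to `0` as `m → ∞`, for every `t`
        (∀ t : ↥(Set.Icc (0:ℝ) T),
          Tendsto (fun m => ⨆ u : U, |f (t, u) - ∑ l : Fin (m + 1),
              (D m l).indicator (fun _ => c (l : ℕ) u) t|) atTop (𝓝 0)) ∧
        -- (2) uniform bound
        (∀ m, ∀ t : ↥(Set.Icc (0:ℝ) T),
          (⨆ u : U, |∑ l : Fin (m + 1), (D m l).indicator (fun _ => c (l : ℕ) u) t|)
            ≤ 2 * ⨆ u : U, |f (t, u)|) := by
  classical
  -- dense sequence in C(U,ℝ)
  obtain ⟨d, hd⟩ : ∃ d : ℕ → C(U, ℝ), DenseRange d :=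
    ⟨TopologicalSpace.denseSeq C(U, ℝ), TopologicalSpace.denseRange_denseSeq _⟩
  set c : ℕ → C(U, ℝ) := fun n => Nat.rec 0 (fun k _ => d k) n with hc
  have hc0 : c 0 = 0 := rfl
  have hcs : ∀ n, c (n + 1) = d n := fun n => rfl
  -- the Carathéodory function as a map into C(U,ℝ)
  set F : ↥(Set.Icc (0:ℝ) T) → C(U, ℝ) := fun t => ⟨fun u => f (t, u), hcont t⟩ with hF
  set g : ℕ → ↥(Set.Icc (0:ℝ) T) → ℝ := fun k t => ‖F t - c k‖ with hg
  have hsup : ∀ (t : ↥(Set.Icc (0:ℝ) T)) (h : C(U, ℝ)), (⨆ u : U, |f (t, u) - h u|) = ‖F t - h‖ := by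
    intro t h
    rw [ContinuousMap.norm_eq_iSup_norm]
    simp [F, Real.norm_eq_abs]
  have hsupf : ∀ t : ↥(Set.Icc (0:ℝ) T), (⨆ u : U, |f (t, u)|) = ‖F t‖ := by
    intro t
    rw [ContinuousMap.norm_eq_iSup_norm]
    simp [F, Real.norm_eq_abs]
  -- measurability of g k
  have hgmeas : ∀ k, Measurable (g k) := by
    intro k
    set s : ℕ → U := TopologicalSpace.denseSeq U with hs
    have hds : DenseRange s := TopologicalSpace.denseRange_denseSeq U
    have hm : ∀ n, Measurable fun t : ↥(Set.Icc (0:ℝ) T) => |f (t, s n) - c k (s n)| :=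
      fun n => ((hmeas (s n)).sub measurable_const).abs
    refine Measurable.isLUB (g := g k) hm ?_
    intro t
    constructor
    · rintro a ⟨n, rfl⟩
      have := (F t - c k).norm_coe_le_norm (s n)
      simpa [F, Real.norm_eq_abs] using this
    · intro b hb
      have hb0 : 0 ≤ b := le_trans (abs_nonneg _) (hb ⟨0, rfl⟩)
      rw [hg]
      rw [ContinuousMap.norm_le _ hb0]
      intro u
      -- {u | ‖(F t - c k) u‖ ≤ b} is closed and contains the dense range of s
      have hcl : IsClosed {u : U | ‖(F t - c k) u‖ ≤ b} :=
        isClosed_le (Continuous.norm (F t - c k).continuous) continuous_const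
      have hsub : Set.range s ⊆ {u : U | ‖(F t - c k) u‖ ≤ b} := by
        rintro _ ⟨n, rfl⟩
        simpa [F, Real.norm_eq_abs] using hb ⟨n, rfl⟩
      have : (Set.univ : Set U) ⊆ {u : U | ‖(F t - c k) u‖ ≤ b} := by
        rw [← hds.closure_eq]
        exact hcl.closure_subset_iff.mpr hsub
      exact this (Set.mem_univ u)
  -- partition: least minimizer of k ↦ g k t over k ≤ m
  set D : (m : ℕ) → Fin (m + 1) → Set (↥(Set.Icc (0:ℝ) T)) := fun m l =>
    {t | (∀ j ≤ m, g (l : ℕ) t ≤ g j t) ∧ ∀ j < (l : ℕ), g (l : ℕ) t < g j t} with hD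
  have hDmeas : ∀ m l, MeasurableSet (D m l) := by
    intro m l
    have : D m l = (⋂ j, ⋂ _ : j ≤ m, {t | g (l : ℕ) t ≤ g j t}) ∩
        ⋂ j, ⋂ _ : j < (l : ℕ), {t | g (l : ℕ) t < g j t} := by
      ext t; simp [D, Set.mem_iInter]
    rw [this]
    exact (MeasurableSet.iInter fun j => MeasurableSet.iInter fun _ =>
        measurableSet_le (hgmeas _) (hgmeas _)).inter
      (MeasurableSet.iInter fun j => MeasurableSet.iInter fun _ =>
        measurableSet_lt (hgmeas _) (hgmeas _))
  have hDdisj : ∀ m, Pairwise fun l l' => Disjoint (D m l) (D m l') := by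
    intro m l l' hne
    rw [Set.disjoint_left]
    intro t htl htl'
    have hne' : (l : ℕ) ≠ (l' : ℕ) := fun h => hne (Fin.ext h)
    rcases hne'.lt_or_gt with h | h
    · have h1 := htl'.2 _ h
      have h2 := htl.1 _ (Nat.lt_succ_iff.mp l'.isLt)
      exact absurd h2 (not_le.mpr h1)
    · have h1 := htl.2 _ h
      have h2 := htl'.1 _ (Nat.lt_succ_iff.mp l.isLt)
      exact absurd h2 (not_le.mpr h1)
  have hDcover : ∀ m (t : ↥(Set.Icc (0:ℝ) T)), ∃ l : Fin (m + 1), t ∈ D m l := by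
    intro m t
    have hex : ∃ n, n ≤ m ∧ ∀ j ≤ m, g n t ≤ g j t := by
      obtain ⟨b, hb, hmin⟩ := Finset.exists_min_image (Finset.range (m + 1))
        (fun j => g j t) ⟨0, by simp⟩
      exact ⟨b, Nat.lt_succ_iff.mp (Finset.mem_range.mp hb),
        fun j hj => hmin j (Finset.mem_range.mpr (Nat.lt_succ_of_le hj))⟩
    set n := Nat.find hex with hn
    obtain ⟨hnm, hmin⟩ := Nat.find_spec hex
    refine ⟨⟨n, Nat.lt_succ_of_le hnm⟩, hmin, ?_⟩
    intro j hj
    have hjm : j ≤ m := le_trans (le_of_lt hj) hnm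
    have := Nat.find_min hex hj
    push_neg at this
    obtain ⟨i, him, hi⟩ := this hjm
    exact lt_of_le_of_lt (hmin i him) hi
  have hDunion : ∀ m, (⋃ l, D m l) = Set.univ := by
    intro m
    ext t
    simp only [Set.mem_iUnion, Set.mem_univ, iff_true]
    exact hDcover m t
  -- the sum collapses to a single c l on D m l
  have hsumeq : ∀ m (t : ↥(Set.Icc (0:ℝ) T)) (l : Fin (m + 1)), t ∈ D m l → ∀ u : U,
      (∑ l' : Fin (m + 1), (D m l').indicator (fun _ => c (l' : ℕ) u) t) = c (l : ℕ) u := by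
    intro m t l htl u
    rw [Finset.sum_eq_single l]
    · exact Set.indicator_of_mem htl _
    · intro l' _ hne
      apply Set.indicator_of_notMem
      intro htl'
      exact (Set.disjoint_left.mp (hDdisj m hne) htl') htl
    · intro h; exact absurd (Finset.mem_univ l) h
  -- bddBelow fact
  have hbdd' : ∀ (t : ↥(Set.Icc (0:ℝ) T)), BddBelow (Set.range fun k : ℕ => g k t) :=
    fun t => ⟨0, by rintro _ ⟨k, rfl⟩; exact norm_nonneg _⟩
  -- property (1)
  have h1 : ∀ m (t : ↥(Set.Icc (0:ℝ) T)),
      (⨆ u : U, |f (t, u) - ∑ l : Fin (m + 1),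
          (D m l).indicator (fun _ => c (l : ℕ) u) t|)
        = ⨅ k : Fin (m + 1), ⨆ u : U, |f (t, u) - c (k : ℕ) u| := by
    intro m t
    obtain ⟨l, htl⟩ := hDcover m t
    have e1 : (⨆ u : U, |f (t, u) - ∑ l' : Fin (m + 1),
        (D m l').indicator (fun _ => c (l' : ℕ) u) t|) = g (l : ℕ) t := by
      rw [show (fun u : U => |f (t, u) - ∑ l' : Fin (m + 1),
          (D m l').indicator (fun _ => c (l' : ℕ) u) t|)
        = fun u : U => |f (t, u) - c (l : ℕ) u| from funext fun u => by
          rw [hsumeq m t l htl u]]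
      exact hsup t (c (l : ℕ))
    have e2 : (⨅ k : Fin (m + 1), ⨆ u : U, |f (t, u) - c (k : ℕ) u|)
        = ⨅ k : Fin (m + 1), g (k : ℕ) t := by
      exact iInf_congr fun k => hsup t (c (k : ℕ))
    rw [e1, e2]
    refine le_antisymm ?_ ?_
    · exact le_ciInf fun k => htl.1 (k : ℕ) (Nat.lt_succ_iff.mp k.isLt)
    · exact ciInf_le ⟨0, by rintro _ ⟨k, rfl⟩; exact norm_nonneg _⟩ l
  refine ⟨c, hc0, D, hDmeas, hDdisj, hDunion, h1, ?_, ?_⟩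
  · -- convergence
    intro t
    rw [Metric.tendsto_atTop]
    intro ε hε
    obtain ⟨n, hn⟩ := hd.exists_dist_lt (F t) hε
    refine ⟨n + 1, fun m hm => ?_⟩
    rw [h1 m t]
    have hnm : (n + 1) < m + 1 := Nat.lt_succ_of_le hm
    have hbb : BddBelow (Set.range fun k : Fin (m + 1) => g (k : ℕ) t) := by
      refine ⟨0, ?_⟩
      rintro _ ⟨k, rfl⟩
      exact norm_nonneg _
    have hle : (⨅ k : Fin (m + 1), g (k : ℕ) t) ≤ g (n + 1) t := by
      have := ciInf_le hbb (⟨n + 1, hnm⟩ : Fin (m + 1))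
      simpa using this
    have hge : 0 ≤ ⨅ k : Fin (m + 1), g (k : ℕ) t :=
      le_ciInf fun k => norm_nonneg _
    have hval : g (n + 1) t < ε := by
      show ‖F t - c (n + 1)‖ < ε
      rw [hcs, ← dist_eq_norm]
      exact hn
    have e2 : (⨅ k : Fin (m + 1), ⨆ u : U, |f (t, u) - c (k : ℕ) u|)
        = ⨅ k : Fin (m + 1), g (k : ℕ) t :=
      iInf_congr fun k => hsup t (c (k : ℕ))
    rw [e2, Real.dist_eq, sub_zero, abs_of_nonneg hge]
    exact lt_of_le_of_lt hle hval
  · -- bound (2)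
    intro m t
    obtain ⟨l, htl⟩ := hDcover m t
    have e1 : (⨆ u : U, |∑ l' : Fin (m + 1),
        (D m l').indicator (fun _ => c (l' : ℕ) u) t|) = ‖c (l : ℕ)‖ := by
      rw [show (fun u : U => |∑ l' : Fin (m + 1),
          (D m l').indicator (fun _ => c (l' : ℕ) u) t|)
        = fun u : U => |c (l : ℕ) u| from funext fun u => by rw [hsumeq m t l htl u]]
      rw [ContinuousMap.norm_eq_iSup_norm]
      simp [Real.norm_eq_abs]
    rw [e1, hsupf t]
    have h2 : ‖c (l : ℕ)‖ ≤ ‖F t - c (l : ℕ)‖ + ‖F t‖ := by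
      calc ‖c (l : ℕ)‖ = ‖F t - (F t - c (l : ℕ))‖ := by ring_nf
        _ ≤ ‖F t‖ + ‖F t - c (l : ℕ)‖ := norm_sub_le _ _
        _ = ‖F t - c (l : ℕ)‖ + ‖F t‖ := add_comm _ _
    have h3 : g (l : ℕ) t ≤ g 0 t := htl.1 0 (Nat.zero_le m)
    have h4 : g 0 t = ‖F t‖ := by rw [hg]; simp [hc0]
    calc ‖c (l : ℕ)‖ ≤ ‖F t - c (l : ℕ)‖ + ‖F t‖ := h2
      _ ≤ ‖F t‖ + ‖F t‖ := add_le_add_left (h4 ▸ h3) _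
      _ = 2 * ‖F t‖ := by ring
end

section
/- Let a > 0, c ∈ ℝ, t_k ∈ ℝ, and α_k > 0. Define, for t ≤ t_k, α(t) = 2a α_k e^{−2a(t − t_k)} / (2a + c² α_k (e^{−2a(t − t_k)} − 1)). Then the denominator 2a + c² α_k (e^{−2a(t−t_k)} − 1) is strictly positive for all t ≤ t_k, α(t_k) = α_k, and α solves the Riccati ordinary differential equation α′(t) + 2a α(t) − c² α(t)² = 0 for t < t_k. -/
/-- The explicit solution of the Riccati ODE `α′ + 2aα − c²α² = 0` with terminal
condition `α(t_k) = α_k > 0`: for `t ≤ t_k`, the denominator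
`2a + c²α_k(e^{−2a(t−t_k)} − 1)` is strictly positive, `α(t_k) = α_k`, and
`α(t) = 2aα_k e^{−2a(t−t_k)} / (2a + c²α_k(e^{−2a(t−t_k)} − 1))` satisfies the ODE
for `t < t_k`. -/
theorem riccati_explicit_solution
    (a c t_k α_k : ℝ) (ha : 0 < a) (hαk : 0 < α_k)
    (α : ℝ → ℝ)
    (hα : ∀ t, α t = 2 * a * α_k * Real.exp (-(2 * a) * (t - t_k)) /
      (2 * a + c ^ 2 * α_k * (Real.exp (-(2 * a) * (t - t_k)) - 1))) :
    (∀ t ≤ t_k, 0 < 2 * a + c ^ 2 * α_k * (Real.exp (-(2 * a) * (t - t_k)) - 1)) ∧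
    α t_k = α_k ∧
    (∀ t < t_k, HasDerivAt α (c ^ 2 * (α t) ^ 2 - 2 * a * α t) t) := by
  have hden : ∀ t ≤ t_k, 0 < 2 * a + c ^ 2 * α_k * (Real.exp (-(2 * a) * (t - t_k)) - 1) := by
    intro t ht
    have h1 : (1:ℝ) ≤ Real.exp (-(2 * a) * (t - t_k)) := by
      rw [show (1:ℝ) = Real.exp 0 by simp]
      apply Real.exp_le_exp.mpr
      nlinarith
    have h2 : 0 ≤ c ^ 2 * α_k * (Real.exp (-(2 * a) * (t - t_k)) - 1) :=
      mul_nonneg (mul_nonneg (sq_nonneg c) hαk.le) (by linarith)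
    linarith
  refine ⟨hden, ?_, ?_⟩
  · rw [hα]; simp
    field_simp
  · intro t ht
    have hDpos := hden t ht.le
    have hDne : 2 * a + c ^ 2 * α_k * (Real.exp (-(2 * a) * (t - t_k)) - 1) ≠ 0 := ne_of_gt hDpos
    have hE : HasDerivAt (fun t => Real.exp (-(2 * a) * (t - t_k)))
        (-(2 * a) * Real.exp (-(2 * a) * (t - t_k))) t := by
      have h := (((hasDerivAt_id t).sub_const t_k).const_mul (-(2 * a))).exp
      simpa [mul_comm] using h
    have hN : HasDerivAt (fun t => 2 * a * α_k * Real.exp (-(2 * a) * (t - t_k)))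
        (2 * a * α_k * (-(2 * a) * Real.exp (-(2 * a) * (t - t_k)))) t := hE.const_mul _
    have hD : HasDerivAt (fun t => 2 * a + c ^ 2 * α_k * (Real.exp (-(2 * a) * (t - t_k)) - 1))
        (c ^ 2 * α_k * (-(2 * a) * Real.exp (-(2 * a) * (t - t_k)))) t := by
      have h := ((hE.sub_const 1).const_mul (c ^ 2 * α_k)).const_add (2 * a)
      simpa using h
    have key := hN.div hD hDne
    have hfun : α = fun t => 2 * a * α_k * Real.exp (-(2 * a) * (t - t_k)) /
        (2 * a + c ^ 2 * α_k * (Real.exp (-(2 * a) * (t - t_k)) - 1)) := funext hα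
    rw [hfun]
    refine key.congr_deriv ?_
    dsimp only
    generalize Real.exp (-(2 * a) * (t - t_k)) = E at hDne ⊢
    field_simp
    ring
end
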